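/- arXiv:2202.07686 — 7 statements merged into one kernel-verified Lean document; each statement's English description precedes it below -/
import Mathlib

section
/- Let G be a finite group in which every subgroup of order p^d is complemented, and let H ≤ G. Then every subgroup of H of order p^d is complemented in H. -/
open Pointwise

/-- A subgroup `A` of `G` is complemented if there is `K ≤ G` with `G = AK` and `A ∩ K = 1`. -/
def Complemented {G : Type*} [Group G] (A : Subgroup G) : Prop :=
  ∃ K : Subgroup G, (A : Set G) * (K : Set G) = Set.univ ∧ A ⊓ K = ⊥

/-- If every subgroup of order `p^d` of a finite group `G` is complemented, and `H ≤ G`,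
then every subgroup of `H` of order `p^d` is complemented in `H`. -/
theorem stmt_1 {G : Type*} [Group G] [Finite G] (p d : ℕ) (hp : p.Prime) (hd : 0 < d)
    (hG : ∀ A : Subgroup G, Nat.card A = p ^ d → Complemented A)
    (H : Subgroup G) :
    ∀ B : Subgroup H, Nat.card B = p ^ d → Complemented B := by
  intro B hB
  set A : Subgroup G := B.map H.subtype with hA
  have hcard : Nat.card A = p ^ d := by
    rw [← hB]
    exact Nat.card_congr
      (Subgroup.equivMapOfInjective B H.subtype H.subtype_injective).toEquiv.symm
  obtain ⟨K, hK1, hK2⟩ := hG A hcard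
  refine ⟨K.comap H.subtype, ?_, ?_⟩
  · ext h
    simp only [Set.mem_univ, iff_true]
    have hmem : (h : G) ∈ (A : Set G) * (K : Set G) := by rw [hK1]; trivial
    obtain ⟨a, ha, k, hk, hak⟩ := hmem
    obtain ⟨b, hb, hba⟩ := Subgroup.mem_map.mp ha
    refine ⟨b, hb, b⁻¹ * h, ?_, by group⟩
    have : ((b⁻¹ * h : H) : G) = k := by
      push_cast
      rw [show (b : G) = a from hba, ← hak]
      group
    simp only [Subgroup.mem_comap, Subgroup.coe_subtype, SetLike.mem_coe]
    rw [this]; exact hk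
  · rw [eq_bot_iff]
    intro x hx
    have hxA : (x : G) ∈ A := Subgroup.mem_map.mpr ⟨x, hx.1, rfl⟩
    have : (x : G) ∈ A ⊓ K := ⟨hxA, hx.2⟩
    rw [hK2] at this
    exact Subgroup.mem_bot.mpr (Subtype.ext (Subgroup.mem_bot.mp this))
end

section
/- Let G be a finite group in which every subgroup of order p^d is complemented, and let N be a normal subgroup of G whose order has p-part p^e with e ≤ d. Then every subgroup of G/N of order p^{d-e} is complemented in G/N. -/
open Pointwise

/-- If every subgroup of order `p^d` of a finite group `G` is complemented and `N ⊴ G`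
has `p`-part of its order equal to `p^e` with `e ≤ d`, then every subgroup of `G/N`
of order `p^(d-e)` is complemented in `G/N`. -/
theorem stmt_2 {G : Type*} [Group G] [Finite G] (p d e : ℕ) (hp : p.Prime) (hd : 0 < d)
    (hG : ∀ A : Subgroup G, Nat.card A = p ^ d → Complemented A)
    (N : Subgroup G) [N.Normal] (hN : (Nat.card N).factorization p = e) (he : e ≤ d) :
    ∀ B : Subgroup (G ⧸ N), Nat.card B = p ^ (d - e) → Complemented B := by
  intro B hB
  haveI : Fact p.Prime := ⟨hp⟩
  set π := QuotientGroup.mk' N with hπ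
  have hsurj : Function.Surjective π := QuotientGroup.mk'_surjective N
  set H : Subgroup G := B.comap π with hH
  have hNleH : N ≤ H := by
    intro n hn
    simp only [hH, Subgroup.mem_comap, hπ, QuotientGroup.mk'_apply]
    rw [(QuotientGroup.eq_one_iff n).mpr hn]
    exact B.one_mem
  -- card H = card B * card N
  have hcardH : Nat.card H = Nat.card B * Nat.card N := by
    have h1 := Subgroup.card_eq_card_quotient_mul_card_subgroup (N.subgroupOf H)
    have h2 : Nat.card (N.subgroupOf H) = Nat.card N :=
      Nat.card_congr (Subgroup.subgroupOfEquivOfLe hNleH).toEquiv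
    have h3 : Nat.card (H ⧸ N.subgroupOf H) = Nat.card B := by
      set f : H →* G ⧸ N := π.comp H.subtype with hf
      have hker : f.ker = N.subgroupOf H := by
        ext ⟨x, hx⟩
        simp [hf, hπ, Subgroup.mem_subgroupOf, QuotientGroup.eq_one_iff, MonoidHom.mem_ker]
      have hrange : f.range = B := by
        have : f.range = H.map π := by
          rw [hf, MonoidHom.range_comp]
          simp [Subgroup.range_subtype]
        rw [this, hH, Subgroup.map_comap_eq_self_of_surjective hsurj]
      rw [← hker]
      have := Nat.card_congr (QuotientGroup.quotientKerEquivRange f).toEquiv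
      rw [this, hrange]
    rw [h1, h2, h3]
  have hBne : Nat.card B ≠ 0 := Nat.card_pos.ne'
  have hNne : Nat.card N ≠ 0 := Nat.card_pos.ne'
  have hHne : Nat.card H ≠ 0 := Nat.card_pos.ne'
  have hfact : (Nat.card H).factorization p = d := by
    rw [hcardH, Nat.factorization_mul hBne hNne, Finsupp.add_apply, hN, hB,
      Nat.Prime.factorization_pow hp, Finsupp.single_eq_same]
    omega
  have hdvd : p ^ d ∣ Nat.card H :=
    (Nat.Prime.pow_dvd_iff_le_factorization hp hHne).mpr hfact.ge
  -- Sylow p-subgroup of H, of order p^d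
  obtain ⟨P₀, hP₀⟩ := Sylow.exists_subgroup_card_pow_prime (G := H) p hdvd
  set P : Subgroup G := P₀.map H.subtype with hPdef
  have hPcard : Nat.card P = p ^ d := by
    rw [← hP₀]
    exact (Nat.card_congr (Subgroup.equivMapOfInjective P₀ H.subtype H.subtype_injective).toEquiv).symm
  have hPle : P ≤ H := Subgroup.map_subtype_le P₀
  obtain ⟨K, hKuniv, hKinf⟩ := hG P hPcard
  -- decompose every element of H as a·k with a ∈ P, k ∈ H ⊓ K
  have hdecomp : ∀ h : G, h ∈ H → ∃ a ∈ P, ∃ k ∈ H ⊓ K, a * k = h := by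
    intro h hh
    have : h ∈ (P : Set G) * (K : Set G) := by rw [hKuniv]; trivial
    obtain ⟨a, ha, k, hk, hak⟩ := this
    refine ⟨a, ha, k, ⟨?_, hk⟩, hak⟩
    have : k = a⁻¹ * h := by rw [← hak]; group
    rw [this]
    exact H.mul_mem (H.inv_mem (hPle ha)) hh
  -- card H = p ^ d * card (H ⊓ K)
  have hcomp : Subgroup.IsComplement' (P.subgroupOf H) ((H ⊓ K).subgroupOf H) := by
    apply Subgroup.isComplement'_of_disjoint_and_mul_eq_univ
    · rw [Subgroup.disjoint_def]
      intro x hx1 hx2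
      have : (x : G) ∈ P ⊓ K := ⟨hx1, hx2.2⟩
      rw [hKinf, Subgroup.mem_bot] at this
      exact Subtype.ext this
    · ext x
      simp only [Set.mem_univ, iff_true]
      obtain ⟨a, ha, k, hk, hak⟩ := hdecomp (x : G) x.2
      refine ⟨⟨a, hPle ha⟩, ha, ⟨k, hk.1⟩, hk, ?_⟩
      exact Subtype.ext hak
  have hcardHK : Nat.card H = p ^ d * Nat.card (H ⊓ K : Subgroup G) := by
    have := hcomp.card_mul
    have e1 : Nat.card (P.subgroupOf H) = p ^ d := by
      rw [← hPcard]
      exact Nat.card_congr (Subgroup.subgroupOfEquivOfLe hPle).toEquiv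
    have e2 : Nat.card ((H ⊓ K).subgroupOf H) = Nat.card (H ⊓ K : Subgroup G) :=
      Nat.card_congr (Subgroup.subgroupOfEquivOfLe inf_le_left).toEquiv
    rw [e1, e2] at this
    exact this.symm
  have hHKne : Nat.card (H ⊓ K : Subgroup G) ≠ 0 := Nat.card_pos.ne'
  have hnotdvd : ¬ p ∣ Nat.card (H ⊓ K : Subgroup G) := by
    intro hpd
    have : (Nat.card H).factorization p ≥ d + 1 := by
      rw [hcardHK, Nat.factorization_mul (pow_ne_zero d hp.pos.ne') hHKne,
        Finsupp.add_apply, Nat.Prime.factorization_pow hp, Finsupp.single_eq_same]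
      have : 1 ≤ (Nat.card (H ⊓ K : Subgroup G)).factorization p :=
        (Nat.Prime.pow_dvd_iff_le_factorization hp hHKne).mp (by simpa using hpd)
      omega
    omega
  -- the complement of B
  refine ⟨K.map π, ?_, ?_⟩
  · ext x
    simp only [Set.mem_univ, iff_true]
    obtain ⟨g, hg⟩ := hsurj x
    obtain ⟨a, ha, k, hk, hak⟩ := (by rw [hKuniv]; trivial : g ∈ (P : Set G) * (K : Set G))
    have hak' : a * k = g := hak
    refine ⟨π a, ?_, π k, ⟨k, hk, rfl⟩, ?_⟩
    · exact (hPle ha : a ∈ H)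
    · show π a * π k = x
      rw [← map_mul, hak', hg]
  · rw [eq_bot_iff]
    intro x hx
    obtain ⟨hxB, k, hk, hkx⟩ := hx
    have hkH : k ∈ H := by rw [hH, Subgroup.mem_comap]; rw [hkx]; exact hxB
    rw [Subgroup.mem_bot, ← orderOf_eq_one_iff]
    have hd1 : orderOf x ∣ p ^ (d - e) := by
      rw [← hB]
      have : orderOf (⟨x, hxB⟩ : B) ∣ Nat.card B := orderOf_dvd_natCard _
      rwa [Subgroup.orderOf_mk] at this
    have hd2 : orderOf x ∣ Nat.card (H ⊓ K : Subgroup G) := by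
      have h1 : orderOf x ∣ orderOf k := by rw [← hkx]; exact orderOf_map_dvd π k
      have h2 : orderOf k ∣ Nat.card (H ⊓ K : Subgroup G) := by
        have hmem : k ∈ H ⊓ K := ⟨hkH, hk⟩
        rw [show orderOf k = orderOf (⟨k, hmem⟩ : (H ⊓ K : Subgroup G)) from
          Subgroup.orderOf_coe (⟨k, hmem⟩ : (H ⊓ K : Subgroup G))]
        exact orderOf_dvd_natCard _
      exact h1.trans h2
    have hcop : Nat.Coprime (p ^ (d - e)) (Nat.card (H ⊓ K : Subgroup G)) :=
      Nat.Coprime.pow_left _ ((Nat.Prime.coprime_iff_not_dvd hp).mpr hnotdvd)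
    exact Nat.eq_one_of_dvd_coprimes hcop hd1 hd2
end

section
/- Let G be a finite group and N a normal p'-subgroup of G (i.e., p does not divide |N|). Then every subgroup of G of order p^d is complemented in G if and only if every subgroup of G/N of order p^d is complemented in G/N. -/
open Pointwise

section Aux

variable {G : Type*} [Group G]

lemma aux_card_set_mul {A P : Subgroup G} (hd : A ⊓ P = ⊥) :
    Nat.card ((A : Set G) * (P : Set G) : Set G) = Nat.card A * Nat.card P := by
  rw [← Nat.card_prod]
  refine (Nat.card_congr (Equiv.ofBijective
    (fun x : A × P => (⟨(x.1 : G) * (x.2 : G),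
      Set.mul_mem_mul x.1.2 x.2.2⟩ : ((A : Set G) * (P : Set G) : Set G))) ⟨?_, ?_⟩)).symm
  · rintro ⟨⟨a, ha⟩, ⟨q, hq⟩⟩ ⟨⟨a', ha'⟩, ⟨q', hq'⟩⟩ h
    simp only [Subtype.mk.injEq] at h
    have h1 : a'⁻¹ * a = q' * q⁻¹ := by
      have h2 : a'⁻¹ * (a * q) * q⁻¹ = q' * q⁻¹ := by rw [h, inv_mul_cancel_left]
      calc a'⁻¹ * a = a'⁻¹ * (a * q) * q⁻¹ := by group
        _ = q' * q⁻¹ := h2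
    have key : a'⁻¹ * a ∈ A ⊓ P := by
      rw [Subgroup.mem_inf]
      exact ⟨mul_mem (inv_mem ha') ha, h1 ▸ mul_mem hq' (inv_mem hq)⟩
    rw [hd, Subgroup.mem_bot] at key
    obtain rfl : a' = a := inv_mul_eq_one.mp key
    obtain rfl : q = q' := mul_left_cancel h
    rfl
  · rintro ⟨y, hy⟩
    rw [Set.mem_mul] at hy
    obtain ⟨a, ha, q, hq, rfl⟩ := hy
    exact ⟨⟨⟨a, ha⟩, ⟨q, hq⟩⟩, rfl⟩

lemma aux_card_map {H : Type*} [Group H] (f : G →* H) (A : Subgroup G)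
    (hd : f.ker ⊓ A = ⊥) : Nat.card (A.map f) = Nat.card A := by
  have hinj : Function.Injective (f.subgroupMap A) := by
    refine (injective_iff_map_eq_one _).mpr ?_
    rintro ⟨a, ha⟩ h1
    have h1' : f a = 1 := congrArg Subtype.val h1
    have : a ∈ f.ker ⊓ A := ⟨h1', ha⟩
    rw [hd, Subgroup.mem_bot] at this
    exact Subtype.ext this
  exact (Nat.card_congr (Equiv.ofBijective _
    ⟨hinj, f.subgroupMap_surjective A⟩)).symm

lemma aux_eq_of_le_of_card_le [Finite G] {H K : Subgroup G} (h : H ≤ K)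
    (hc : Nat.card K ≤ Nat.card H) : H = K := by
  apply SetLike.coe_injective
  refine Set.eq_of_subset_of_ncard_le h ?_ (Set.toFinite _)
  rw [← Nat.card_coe_set_eq, ← Nat.card_coe_set_eq]
  exact hc

lemma aux_card_map_dvd {H : Type*} [Group H] [Finite G] (f : G →* H) (M : Subgroup G) :
    Nat.card (M.map f) ∣ Nat.card M := by
  have e : M.map f = (f.comp M.subtype).range := by
    rw [MonoidHom.range_comp, Subgroup.range_subtype]
  rw [e, ← Nat.card_congr (QuotientGroup.quotientKerEquivRange (f.comp M.subtype)).toEquiv]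
  exact Subgroup.card_quotient_dvd_card _

end Aux

/-- If `N` is a normal `p'`-subgroup of a finite group `G`, then every subgroup of `G` of
order `p^d` is complemented in `G` iff every subgroup of `G/N` of order `p^d` is
complemented in `G/N`. -/
theorem stmt_3 {G : Type*} [Group G] [Finite G] (p d : ℕ) (hp : p.Prime) (hd : 0 < d)
    (N : Subgroup G) [N.Normal] (hN : ¬ p ∣ Nat.card N) :
    (∀ A : Subgroup G, Nat.card A = p ^ d → Complemented A) ↔
      (∀ B : Subgroup (G ⧸ N), Nat.card B = p ^ d → Complemented B) := by
  haveI := Fact.mk hp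
  set π := QuotientGroup.mk' N with hπ
  have hπsurj : Function.Surjective π := QuotientGroup.mk'_surjective N
  have hcop : Nat.Coprime (p ^ d) (Nat.card N) :=
    Nat.Coprime.pow_left d ((Nat.Prime.coprime_iff_not_dvd hp).mpr hN)
  -- any subgroup of order p^d intersects N trivially
  have hANbot : ∀ A : Subgroup G, Nat.card A = p ^ d → A ⊓ N = ⊥ := by
    intro A hA
    exact Subgroup.inf_eq_bot_of_coprime (by rw [hA]; exact hcop)
  have hker : ∀ A : Subgroup G, Nat.card A = p ^ d → π.ker ⊓ A = ⊥ := by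
    intro A hA
    rw [hπ, QuotientGroup.ker_mk', inf_comm]
    exact hANbot A hA
  constructor
  · -- forward direction
    intro h B hB
    -- cardinality of the preimage of B
    have hcard₁ : Nat.card (B.comap π) = Nat.card N * Nat.card B := by
      have e : ((B.comap π : Subgroup G) : Set G) = QuotientGroup.mk ⁻¹' (B : Set (G ⧸ N)) := rfl
    -- transport the equivalence
      have e2 : (B.comap π : Subgroup G) ≃ (N × (B : Set (G ⧸ N))) :=
        (Equiv.setCongr e).trans (QuotientGroup.preimageMkEquivSubgroupProdSet N B)
      rw [Nat.card_congr e2, Nat.card_prod]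
      rfl
    have hdvd : p ^ d ∣ Nat.card (B.comap π) := by
      rw [hcard₁, hB]; exact dvd_mul_left _ _
    obtain ⟨A₀, hA₀⟩ := Sylow.exists_subgroup_card_pow_prime p hdvd
    have hex : ∃ A : Subgroup G, A ≤ B.comap π ∧ Nat.card A = p ^ d := by
      refine ⟨A₀.map (B.comap π).subtype, Subgroup.map_subtype_le A₀, ?_⟩
      rw [← hA₀]
      exact (Nat.card_congr (Subgroup.equivMapOfInjective A₀ _
        (Subgroup.subtype_injective _)).toEquiv).symm
    obtain ⟨A, hAle, hAcard⟩ := hex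
    have hAN : A ⊓ N = ⊥ := hANbot A hAcard
    -- A maps onto B
    have hBmap : A.map π = B := by
      have hle : A.map π ≤ B := by
        have := Subgroup.map_mono (f := π) hAle
        rwa [Subgroup.map_comap_eq_self_of_surjective hπsurj B] at this
      apply aux_eq_of_le_of_card_le hle
      rw [aux_card_map π A (hker A hAcard), hAcard, hB]
    obtain ⟨K, hmul, hinf⟩ := h A hAcard
    refine ⟨K.map π, ?_, ?_⟩
    · rw [← hBmap, Subgroup.coe_map, Subgroup.coe_map, ← Set.image_mul, hmul,
        Set.image_univ, Set.range_eq_univ]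
      exact hπsurj
    · -- disjointness
      set M : Subgroup G := (A ⊔ N) ⊓ K with hMdef
      have hAM : A ⊓ M = ⊥ := by
        rw [eq_bot_iff, ← hinf]
        exact inf_le_inf le_rfl inf_le_right
      have hset : (A : Set G) * (M : Set G) = ((A ⊔ N : Subgroup G) : Set G) := by
        apply subset_antisymm
        · rintro x hx
          rw [Set.mem_mul] at hx
          obtain ⟨a, ha, m, hm, rfl⟩ := hx
          have hm' : m ∈ M := hm
          exact mul_mem (Subgroup.mem_sup_left ha) hm'.1
        · intro x hx
          have hx' : x ∈ (A : Set G) * (N : Set G) := by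
            rw [← Subgroup.mul_normal]; exact hx
          rw [Set.mem_mul] at hx'
          obtain ⟨a, ha, n, hn, rfl⟩ := hx'
          have hn2 : (n : G) ∈ (A : Set G) * (K : Set G) := by
            rw [hmul]; exact Set.mem_univ n
          rw [Set.mem_mul] at hn2
          obtain ⟨a₂, ha₂, k, hk, hnk⟩ := hn2
          have hkH : k ∈ A ⊔ N := by
            have hkeq : k = a₂⁻¹ * n := by rw [← hnk, inv_mul_cancel_left]
            rw [hkeq]
            exact mul_mem (inv_mem (Subgroup.mem_sup_left ha₂)) (Subgroup.mem_sup_right hn)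
          have hkM : k ∈ M := ⟨hkH, hk⟩
          have : a * n = (a * a₂) * k := by rw [← hnk, mul_assoc]
          rw [this]
          exact Set.mul_mem_mul (mul_mem ha ha₂) hkM
      have hMcard : Nat.card M = Nat.card N := by
        have h1 := aux_card_set_mul hAN
        have h2 := aux_card_set_mul hAM
        rw [hset] at h2
        rw [← Subgroup.mul_normal] at h1
        have h3 : Nat.card A * Nat.card N = Nat.card A * Nat.card M := by
          rw [← h1, ← h2]
        exact (Nat.eq_of_mul_eq_mul_left Nat.card_pos h3).symm
      -- B ⊓ K.map π is contained in M.map π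
      have hle2 : B ⊓ K.map π ≤ M.map π := by
        rintro x hx
        rw [Subgroup.mem_inf] at hx
        obtain ⟨hxB, hxK⟩ := hx
        rw [← hBmap, Subgroup.mem_map] at hxB
        obtain ⟨a, ha, rfl⟩ := hxB
        rw [Subgroup.mem_map] at hxK
        obtain ⟨k, hk, hpk⟩ := hxK
        have hn : a * k⁻¹ ∈ N := by
          have h1 : π (a * k⁻¹) = 1 := by
            rw [map_mul, map_inv, hpk, mul_inv_cancel]
          have : a * k⁻¹ ∈ π.ker := h1
          rwa [hπ, QuotientGroup.ker_mk'] at this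
        have hkH : k ∈ A ⊔ N := by
          have hkeq : k = (a * k⁻¹)⁻¹ * a := by group
          rw [hkeq]
          exact mul_mem (inv_mem (Subgroup.mem_sup_right hn)) (Subgroup.mem_sup_left ha)
        exact Subgroup.mem_map.mpr ⟨k, ⟨hkH, hk⟩, hpk⟩
      have hd1 : Nat.card (B ⊓ K.map π : Subgroup (G ⧸ N)) ∣ p ^ d := by
        rw [← hB]
        exact Subgroup.card_dvd_of_le inf_le_left
      have hd2 : Nat.card (B ⊓ K.map π : Subgroup (G ⧸ N)) ∣ Nat.card N := by
        calc Nat.card (B ⊓ K.map π : Subgroup (G ⧸ N)) ∣ Nat.card (M.map π) :=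
              Subgroup.card_dvd_of_le hle2
          _ ∣ Nat.card M := aux_card_map_dvd π M
          _ = Nat.card N := hMcard
      have : Nat.card (B ⊓ K.map π : Subgroup (G ⧸ N)) = 1 := by
        have := Nat.dvd_gcd hd1 hd2
        rwa [hcop, Nat.dvd_one] at this
      exact Subgroup.card_eq_one.mp this
  · -- backward direction
    intro h A hA
    have hAN : A ⊓ N = ⊥ := hANbot A hA
    have hBcard : Nat.card (A.map π) = p ^ d := by
      rw [aux_card_map π A (hker A hA), hA]
    obtain ⟨Kb, hm, hi⟩ := h (A.map π) hBcard
    refine ⟨Kb.comap π, ?_, ?_⟩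
    · apply Set.eq_univ_of_forall
      intro g
      have hg : π g ∈ ((A.map π : Subgroup (G ⧸ N)) : Set (G ⧸ N)) * (Kb : Set (G ⧸ N)) := by
        rw [hm]; exact Set.mem_univ _
      rw [Set.mem_mul] at hg
      obtain ⟨b, hb, κ, hκ, hbκ⟩ := hg
      rw [SetLike.mem_coe, Subgroup.mem_map] at hb
      obtain ⟨a, ha, rfl⟩ := hb
      have hmem : a⁻¹ * g ∈ Kb.comap π := by
        rw [Subgroup.mem_comap]
        have : π (a⁻¹ * g) = κ := by
          rw [map_mul, map_inv, ← hbκ, inv_mul_cancel_left]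
        rw [this]
        exact hκ
      have := Set.mul_mem_mul (show (a : G) ∈ (A : Set G) from ha)
        (show (a⁻¹ * g : G) ∈ ((Kb.comap π : Subgroup G) : Set G) from hmem)
      simpa [mul_inv_cancel_left] using this
    · rw [eq_bot_iff]
      intro x hx
      rw [Subgroup.mem_inf] at hx
      obtain ⟨hxA, hxK⟩ := hx
      have h1 : π x ∈ A.map π ⊓ Kb := by
        rw [Subgroup.mem_inf]
        exact ⟨Subgroup.mem_map.mpr ⟨x, hxA, rfl⟩, Subgroup.mem_comap.mp hxK⟩
      rw [hi, Subgroup.mem_bot] at h1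
      have hxN : x ∈ N := by
        have : x ∈ π.ker := h1
        rwa [hπ, QuotientGroup.ker_mk'] at this
      have : x ∈ A ⊓ N := ⟨hxA, hxN⟩
      rwa [hAN] at this
end

section
/- Let G be a finite group with p^d ≤ |G|_p in which every subgroup of order p^d is complemented. Then for every positive integer m with p^{md} ≤ |G|_p, every subgroup of G of order p^{md} is complemented in G. -/
open Pointwise

/-- If `p^d` divides `|G|` (i.e. `p^d ≤ |G|_p`) and every subgroup of order `p^d` is
complemented in `G`, then for every positive integer `m` with `p^(m*d) ≤ |G|_p`, every
subgroup of `G` of order `p^(m*d)` is complemented in `G`. -/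
theorem stmt_4 {G : Type*} [Group G] [Finite G] (p d : ℕ) (hp : p.Prime) (hd : 0 < d)
    (hdvd : d ≤ (Nat.card G).factorization p)
    (hG : ∀ A : Subgroup G, Nat.card A = p ^ d → Complemented A) :
    ∀ m : ℕ, 0 < m → m * d ≤ (Nat.card G).factorization p →
      ∀ A : Subgroup G, Nat.card A = p ^ (m * d) → Complemented A := by
  haveI : Fact p.Prime := ⟨hp⟩
  have hppos : 0 < p := hp.pos
  intro m
  induction m with
  | zero => intro h; exact absurd h (lt_irrefl 0)
  | succ m ih =>
    intro _ hle A hA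
    rcases Nat.eq_zero_or_pos m with rfl | hm
    · exact hG A (by simpa using hA)
    -- the inductive step
    have hmd : m * d ≤ (m + 1) * d := Nat.mul_le_mul_right d (Nat.le_succ m)
    -- find B ≤ A with card B = p ^ (m * d)
    obtain ⟨B', hB'⟩ := Sylow.exists_subgroup_card_pow_prime (G := A) p
      (hA ▸ pow_dvd_pow p hmd)
    set B : Subgroup G := B'.map A.subtype with hBdef
    have hBle : B ≤ A := Subgroup.map_subtype_le B'
    have hBcard : Nat.card B = p ^ (m * d) := by
      rw [← hB']
      exact (Nat.card_congr
        (Subgroup.equivMapOfInjective B' A.subtype A.subtype_injective).toEquiv).symm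
    -- B is complemented by induction
    obtain ⟨K, hKmul, hKinf⟩ := ih hm (le_trans hmd hle) B hBcard
    have hBK : Subgroup.IsComplement' B K :=
      Subgroup.isComplement'_of_disjoint_and_mul_eq_univ (disjoint_iff.mpr hKinf) hKmul
    have hKindex : K.index = p ^ (m * d) := hBK.index_eq_card.trans hBcard
    have hAindex : A.index * (p ^ (m * d) * p ^ d) = Nat.card G := by
      rw [← pow_add, ← Nat.add_one_mul, ← hA]
      exact A.index_mul_card
    have hCpos : 0 < (A ⊓ K).index :=
      Nat.pos_of_ne_zero (Subgroup.index_ne_zero_of_finite)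
    -- card (A ⊓ K) = p ^ d
    have hClow : p ^ d ≤ Nat.card ↥(A ⊓ K) := by
      have h1 : (A ⊓ K).index * Nat.card ↥(A ⊓ K) = Nat.card G := Subgroup.index_mul_card _
      have h2 : (A ⊓ K).index ≤ A.index * K.index := Subgroup.index_inf_le
      rw [hKindex] at h2
      have h3 : (A ⊓ K).index * p ^ d ≤ (A ⊓ K).index * Nat.card ↥(A ⊓ K) := by
        calc (A ⊓ K).index * p ^ d ≤ A.index * p ^ (m * d) * p ^ d :=
              Nat.mul_le_mul_right _ h2
          _ = Nat.card G := by rw [mul_assoc]; exact hAindex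
          _ = (A ⊓ K).index * Nat.card ↥(A ⊓ K) := h1.symm
      exact Nat.le_of_mul_le_mul_left h3 hCpos
    have hBdisj : Disjoint B (A ⊓ K) := by
      rw [disjoint_iff, ← inf_assoc, inf_of_le_left hBle, hKinf]
    have hChigh : Nat.card ↥(A ⊓ K) ≤ p ^ d := by
      have hinj : Function.Injective
          (fun x : B × (A ⊓ K : Subgroup G) => (⟨x.1 * x.2,
            A.mul_mem (hBle x.1.2) x.2.2.1⟩ : A)) := by
        intro x y h
        exact Subgroup.mul_injective_of_disjoint hBdisj (Subtype.ext_iff.mp h)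
      have := Nat.card_le_card_of_injective _ hinj
      rw [Nat.card_prod, hBcard, hA, Nat.add_one_mul, pow_add] at this
      exact Nat.le_of_mul_le_mul_left this (Nat.pow_pos hppos)
    have hC : Nat.card ↥(A ⊓ K) = p ^ d := le_antisymm hChigh hClow
    -- complement L of A ⊓ K
    obtain ⟨L, hLmul, hLinf⟩ := hG (A ⊓ K) hC
    have hCL : Subgroup.IsComplement' (A ⊓ K) L :=
      Subgroup.isComplement'_of_disjoint_and_mul_eq_univ (disjoint_iff.mpr hLinf) hLmul
    have hLindex : L.index = p ^ d := hCL.index_eq_card.trans hC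
    -- K ⊓ L complements A
    have hAMinf : A ⊓ (K ⊓ L) = ⊥ := by rw [← inf_assoc, hLinf]
    have hAMdisj : Disjoint A (K ⊓ L) := disjoint_iff.mpr hAMinf
    have hMindex : (K ⊓ L).index ≤ Nat.card A := by
      calc (K ⊓ L).index ≤ K.index * L.index := Subgroup.index_inf_le
        _ = p ^ (m * d) * p ^ d := by rw [hKindex, hLindex]
        _ = Nat.card A := by rw [hA, Nat.add_one_mul, pow_add]
    have hge : Nat.card G ≤ Nat.card A * Nat.card ↥(K ⊓ L) := by
      calc Nat.card G = (K ⊓ L).index * Nat.card ↥(K ⊓ L) := (Subgroup.index_mul_card _).symm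
        _ ≤ Nat.card A * Nat.card ↥(K ⊓ L) := Nat.mul_le_mul_right _ hMindex
    have hle' : Nat.card A * Nat.card ↥(K ⊓ L) ≤ Nat.card G := by
      have := Nat.card_le_card_of_injective _ (Subgroup.mul_injective_of_disjoint hAMdisj)
      rwa [Nat.card_prod] at this
    have hAM : Subgroup.IsComplement' A (K ⊓ L) :=
      Subgroup.isComplement'_of_card_mul_and_disjoint (le_antisymm hle' hge) hAMdisj
    exact ⟨K ⊓ L, hAM.mul_eq, hAMinf⟩
end

section
/- Let G be a finite group with O_{p'}(G) = 1 (the largest normal p'-subgroup is trivial). If a Sylow p-subgroup P of G is elementary abelian, then the Frattini subgroup of G is trivial. -/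
open Subgroup Pointwise


/-- In an elementary abelian `p`-group, every subgroup admits a retraction. -/
theorem exists_retraction {H : Type*} [CommGroup H] {p : ℕ} (hp : p.Prime)
    (hexp : ∀ x : H, x ^ p = 1) (S : Subgroup H) :
    ∃ π : H →* H, (∀ x, π x ∈ S) ∧ (∀ x ∈ S, π x = x) := by
  haveI : Fact p.Prime := ⟨hp⟩
  haveI : NeZero p := ⟨hp.pos.ne'⟩
  have hsmul : ∀ x : Additive H, p • x = 0 := fun x => by
    have := congrArg Additive.ofMul (hexp x.toMul); rwa [ofMul_pow, ofMul_toMul, ofMul_one] at this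
  letI mod : Module (ZMod p) (Additive H) := AddCommGroup.zmodModule (n := p) hsmul
  let W : Submodule (ZMod p) (Additive H) :=
    AddSubgroup.toZModSubmodule p (Subgroup.toAddSubgroup S)
  obtain ⟨W', hW'⟩ := Submodule.exists_isCompl W
  let pr := W.projectionOnto W' hW'
  have memW : ∀ v : Additive H, v ∈ W ↔ v.toMul ∈ S := by
    intro v; rfl
  refine ⟨{ toFun := fun x => ((pr (Additive.ofMul x) : Additive H)).toMul
            map_one' := ?_
            map_mul' := ?_ }, ?_, ?_⟩
  · have : pr (Additive.ofMul (1 : H)) = 0 := by rw [show Additive.ofMul (1:H) = 0 from rfl, map_zero]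
    show Additive.toMul ((pr (Additive.ofMul (1:H))) : Additive H) = 1
    rw [this]; rfl
  · intro x y
    have : pr (Additive.ofMul (x * y)) = pr (Additive.ofMul x) + pr (Additive.ofMul y) := by
      rw [show Additive.ofMul (x*y) = Additive.ofMul x + Additive.ofMul y from rfl, map_add]
    show Additive.toMul ((pr (Additive.ofMul (x*y))) : Additive H) =
      Additive.toMul ((pr (Additive.ofMul x)) : Additive H) * Additive.toMul ((pr (Additive.ofMul y)) : Additive H)
    rw [this]; rfl
  · intro x
    exact (memW _).mp (pr (Additive.ofMul x)).2
  · intro x hx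
    have hxW : Additive.ofMul x ∈ W := (memW _).mpr hx
    have := Submodule.projectionOnto_apply_left hW' ⟨Additive.ofMul x, hxW⟩
    simp only [MonoidHom.coe_mk, OneHom.coe_mk]
    exact congrArg Additive.toMul (congrArg Subtype.val this)


theorem aux_le_sylow {G : Type*} [Group G] [Finite G] {p : ℕ} [Fact p.Prime] {N : Subgroup G}
    (hN : N.Normal) (h : IsPGroup p N) (P : Sylow p G) : N ≤ P := by
  obtain ⟨Q, hQ⟩ := h.exists_le_sylow
  obtain ⟨g, rfl⟩ := MulAction.exists_smul_eq G Q P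
  have : N = MulAut.conj g • N := (@Normal.conj_smul_eq_self _ _ g N hN).symm
  rw [this]
  rintro x ⟨y, hy, rfl⟩
  exact ⟨y, hQ hy, rfl⟩

theorem aux_pgroup {G : Type*} [Group G] [Finite G] {p : ℕ} (hp : p.Prime) (N : Subgroup G)
    [hN : N.Normal] (hnil : Group.IsNilpotent ↥N)
    (h : ∀ M : Subgroup G, M.Normal → ¬ p ∣ Nat.card M → M = ⊥) : IsPGroup p N := by
  haveI : Fact p.Prime := ⟨hp⟩
  rw [IsPGroup.iff_card]
  refine ⟨(Nat.card N).primeFactorsList.length, Nat.eq_prime_pow_of_unique_prime_dvd Nat.card_pos.ne' ?_⟩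
  intro q hq hqdvd
  by_contra hqp
  haveI : Fact q.Prime := ⟨hq⟩
  -- Sylow q-subgroup of N
  obtain ⟨Q⟩ : Nonempty (Sylow q ↥N) := inferInstance
  have hQnormal : (Q : Subgroup ↥N).Normal := by
    have := (isNilpotent_of_finite_tfae (G := ↥N)).out 0 3
    exact (this.mp hnil) q ⟨hq⟩ Q
  haveI := hQnormal
  haveI : (Q : Subgroup ↥N).Characteristic := Sylow.characteristic_of_normal Q hQnormal
  have hmapnormal : ((Q : Subgroup ↥N).map N.subtype).Normal :=
    ConjAct.normal_of_characteristic_of_normal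
  have hcardQ : Nat.card ((Q : Subgroup ↥N).map N.subtype) = Nat.card (Q : Subgroup ↥N) :=
    Nat.card_congr (equivMapOfInjective _ _ N.subtype_injective).symm.toEquiv
  obtain ⟨n, hn⟩ := IsPGroup.iff_card.mp Q.2
  have hbot := h _ hmapnormal (by
    rw [hcardQ, hn]
    intro hdvd
    exact hqp ((Nat.prime_dvd_prime_iff_eq hp hq).mp (hp.dvd_of_dvd_pow hdvd)).symm)
  -- but q divides card N so Q is nontrivial
  have : q ∣ Nat.card (Q : Subgroup ↥N) := by
    rw [Q.card_eq_multiplicity]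
    exact dvd_pow_self q (Nat.Prime.factorization_pos_of_dvd hq Nat.card_pos.ne' hqdvd).ne'
  rw [← hcardQ, hbot, Subgroup.card_bot] at this
  exact hq.one_lt.ne' (Nat.eq_one_of_dvd_one this)

theorem aux_gaschutz {G : Type*} [Group G] [Finite G] {p : ℕ} (hp : p.Prime)
    (N P : Subgroup G) [hN : N.Normal] (hNP : N ≤ P)
    (hab : ∀ x y : G, x ∈ P → y ∈ P → x * y = y * x)
    (hexp : ∀ x ∈ P, x ^ p = 1)
    (hm : ¬ p ∣ P.index) :
    ∃ K : Subgroup G, N ⊔ K = ⊤ ∧ ∀ n ∈ N, n ∈ K → n = 1 := by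
  classical
  letI cgP : CommGroup ↥P := { (inferInstance : Group ↥P) with
    mul_comm := fun a b => Subtype.ext (hab a b a.2 b.2) }
  letI cgN : CommGroup ↥N := { (inferInstance : Group ↥N) with
    mul_comm := fun a b => Subtype.ext (hab a b (hNP a.2) (hNP b.2)) }
  obtain ⟨π₀, hπ₀mem, hπ₀id⟩ := exists_retraction hp
    (fun x : ↥P => Subtype.ext (by simpa using hexp (x : G) x.2)) (N.subgroupOf P)
  set π : ↥P → G := fun x => ((π₀ x : ↥P) : G) with hπ
  have hπN : ∀ x, π x ∈ N := fun x => (mem_subgroupOf.mp (hπ₀mem x) : _)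
  have hπP : ∀ x, π x ∈ P := fun x => (π₀ x).2
  have hπmul : ∀ x y : ↥P, π (x * y) = π x * π y := fun x y =>
    congrArg Subtype.val (map_mul π₀ x y)
  have hπid : ∀ (x : ↥P), (x : G) ∈ N → π x = x :=
    fun x hx => congrArg Subtype.val (hπ₀id x (mem_subgroupOf.mpr hx))
  -- transversal
  letI : Fintype (G ⧸ (P : Subgroup G)) := Fintype.ofFinite _
  set r : G ⧸ (P : Subgroup G) → G := Quotient.out with hr_def
  have hr : ∀ q, (QuotientGroup.mk (r q) : G ⧸ (P : Subgroup G)) = q :=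
    fun q => QuotientGroup.out_eq' q
  have key : ∀ (g : G) (q : G ⧸ (P : Subgroup G)), (r (g • q))⁻¹ * g * r q ∈ P := by
    intro g q
    have h1 : (QuotientGroup.mk (r (g • q)) : G ⧸ (P : Subgroup G)) = QuotientGroup.mk (g * r q) := by
      rw [hr]
      conv_lhs => rw [← hr q]
      rfl
    have := QuotientGroup.eq.mp h1
    rwa [← mul_assoc] at this
  set c : G → (G ⧸ (P : Subgroup G)) → ↥P := fun g q => ⟨(r (g • q))⁻¹ * g * r q, key g q⟩ with hc
  set nel : G → (G ⧸ (P : Subgroup G)) → ↥N := fun g q =>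
    ⟨r (g • q) * π (c g q) * (r (g • q))⁻¹, hN.conj_mem _ (hπN _) _⟩ with hnel
  set θ : G → ↥N := fun g => ∏ q, nel g q with hθ
  -- conjugation homomorphism
  let conjN : G → (↥N →* ↥N) := fun g =>
    { toFun := fun n => ⟨g * n * g⁻¹, hN.conj_mem n.1 n.2 g⟩
      map_one' := Subtype.ext (by simp)
      map_mul' := fun a b => Subtype.ext (by show g * (↑a * ↑b) * g⁻¹ = g * ↑a * g⁻¹ * (g * ↑b * g⁻¹); group) }
  -- pointwise cocycle identity
  have hc_mul : ∀ g₁ g₂ q, ((c (g₁ * g₂) q : G)) = (c g₁ (g₂ • q) : G) * (c g₂ q : G) := by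
    intro g₁ g₂ q
    show (r ((g₁ * g₂) • q))⁻¹ * (g₁ * g₂) * r q =
      ((r (g₁ • g₂ • q))⁻¹ * g₁ * r (g₂ • q)) * ((r (g₂ • q))⁻¹ * g₂ * r q)
    rw [mul_smul]
    group
  have conj_helper : ∀ A B c₁ π₂ g₁ : G, g₁ * B = A * c₁ → c₁ * π₂ * c₁⁻¹ = π₂ →
      g₁ * (B * π₂ * B⁻¹) * g₁⁻¹ = A * π₂ * A⁻¹ := by
    intro A B c₁ π₂ g₁ h1 h2
    have : g₁ * (B * π₂ * B⁻¹) * g₁⁻¹ = (g₁ * B) * π₂ * (g₁ * B)⁻¹ := by group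
    rw [this, h1]
    have : A * c₁ * π₂ * (A * c₁)⁻¹ = A * (c₁ * π₂ * c₁⁻¹) * A⁻¹ := by group
    rw [this, h2]
  have hnel_cocycle : ∀ g₁ g₂ q, nel (g₁ * g₂) q = nel g₁ (g₂ • q) * conjN g₁ (nel g₂ q) := by
    intro g₁ g₂ q
    apply Subtype.ext
    show r ((g₁ * g₂) • q) * π (c (g₁ * g₂) q) * (r ((g₁ * g₂) • q))⁻¹ =
      (r (g₁ • g₂ • q) * π (c g₁ (g₂ • q)) * (r (g₁ • g₂ • q))⁻¹) *
        (g₁ * (r (g₂ • q) * π (c g₂ q) * (r (g₂ • q))⁻¹) * g₁⁻¹)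
    have hpc : π (c (g₁ * g₂) q) = π (c g₁ (g₂ • q)) * π (c g₂ q) := by
      rw [← hπmul]
      congr 1
      exact Subtype.ext (hc_mul g₁ g₂ q)
    have hgB : g₁ * r (g₂ • q) = r (g₁ • g₂ • q) * (c g₁ (g₂ • q) : G) := by
      show _ = r (g₁ • g₂ • q) * ((r (g₁ • g₂ • q))⁻¹ * g₁ * r (g₂ • q))
      group
    have hcomm : (c g₁ (g₂ • q) : G) * π (c g₂ q) * (c g₁ (g₂ • q) : G)⁻¹ = π (c g₂ q) := by
      rw [hab _ _ (c g₁ (g₂ • q)).2 (hπP (c g₂ q))]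
      group
    rw [conj_helper _ _ _ _ _ hgB hcomm, mul_smul, hpc]
    group
  have hθ_cocycle : ∀ g₁ g₂, θ (g₁ * g₂) = θ g₁ * conjN g₁ (θ g₂) := by
    intro g₁ g₂
    have h1 : θ (g₁ * g₂) = ∏ q, (nel g₁ (g₂ • q) * conjN g₁ (nel g₂ q)) :=
      Finset.prod_congr rfl fun q _ => hnel_cocycle g₁ g₂ q
    have h2 : ∏ q, (nel g₁ (g₂ • q) * conjN g₁ (nel g₂ q)) =
        (∏ q, nel g₁ (g₂ • q)) * ∏ q, conjN g₁ (nel g₂ q) := Finset.prod_mul_distrib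
    have h3 : (∏ q, nel g₁ (g₂ • q)) = ∏ q, nel g₁ q :=
      Fintype.prod_equiv (MulAction.toPerm g₂) _ _ fun q => rfl
    rw [h1, h2, h3]
    congr 1
    exact (map_prod (conjN g₁) _ _).symm
  -- θ restricted to N is the index-th power map
  have hsmul_fix : ∀ n : G, n ∈ N → ∀ q : G ⧸ (P : Subgroup G), n • q = q := by
    intro n hn q
    have hlhs : n • q = QuotientGroup.mk (n * r q) := by
      conv_lhs => rw [← hr q]
      rfl
    rw [hlhs]
    conv_rhs => rw [← hr q]
    rw [QuotientGroup.eq]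
    have : (n * r q)⁻¹ * r q = (r q)⁻¹ * n⁻¹ * r q := by group
    rw [this]
    exact hNP (hN.conj_mem' n⁻¹ (N.inv_mem hn) (r q))
  have hθN : ∀ n : ↥N, θ (n : G) = n ^ P.index := by
    intro n
    have hq : ∀ q, nel (n : G) q = n := by
      intro q
      have hcmem : ((c (n : G) q : ↥P) : G) ∈ N := by
        show (r ((n : G) • q))⁻¹ * (n : G) * r q ∈ N
        rw [hsmul_fix (n : G) n.2 q]
        exact hN.conj_mem' (n : G) n.2 (r q)
      apply Subtype.ext
      show r ((n : G) • q) * π (c (n : G) q) * (r ((n : G) • q))⁻¹ = (n : G)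
      rw [hπid _ hcmem]
      show r ((n : G) • q) * ((r ((n : G) • q))⁻¹ * (n : G) * r q) * (r ((n : G) • q))⁻¹ = (n : G)
      rw [hsmul_fix (n : G) n.2 q]
      group
    show (∏ q, nel (n : G) q) = n ^ P.index
    rw [Finset.prod_congr rfl fun q _ => hq q, Finset.prod_const, Finset.card_univ]
    congr 1
    rw [Subgroup.index, Nat.card_eq_fintype_card]
  -- inverting the index mod p
  obtain ⟨e, -, he⟩ := Nat.exists_mul_mod_eq_one_of_coprime
    (Nat.Coprime.symm ((Nat.Prime.coprime_iff_not_dvd hp).mpr hm)) hp.one_lt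
  have hNpow : ∀ n : ↥N, n ^ p = 1 := by
    intro n
    exact Subtype.ext (by simpa using hexp (n : G) (hNP n.2))
  have hpow : ∀ n : ↥N, n ^ (P.index * e) = n := by
    intro n
    calc n ^ (P.index * e) = n ^ (P.index * e % p + p * (P.index * e / p)) := by
          rw [Nat.mod_add_div]
    _ = n ^ (P.index * e % p) * (n ^ p) ^ (P.index * e / p) := by rw [pow_add, pow_mul]
    _ = n ^ 1 * 1 := by rw [he, hNpow, one_pow]
    _ = n := by rw [pow_one, mul_one]
  set ψ : G → ↥N := fun g => θ g ^ e with hψ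
  have hψ_cocycle : ∀ g₁ g₂, ψ (g₁ * g₂) = ψ g₁ * conjN g₁ (ψ g₂) := by
    intro g₁ g₂
    show θ (g₁ * g₂) ^ e = θ g₁ ^ e * conjN g₁ (θ g₂ ^ e)
    rw [hθ_cocycle, mul_pow, map_pow]
  have hψN : ∀ n : ↥N, ψ (n : G) = n := by
    intro n
    show θ (n : G) ^ e = n
    rw [hθN, ← pow_mul]
    exact hpow n
  have hψone : ψ 1 = 1 := by
    have := hψN 1
    simpa using this
  have hψinv : ∀ g, ψ g = 1 → ψ g⁻¹ = 1 := by
    intro g hg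
    have h1 : ψ (g * g⁻¹) = 1 := by rw [mul_inv_cancel]; exact hψone
    rw [hψ_cocycle g g⁻¹, hg, one_mul] at h1
    have h2 : g * (ψ g⁻¹ : G) * g⁻¹ = 1 := congrArg Subtype.val h1
    apply Subtype.ext
    have := congrArg (fun y => g⁻¹ * y * g) h2
    simpa [mul_assoc] using this
  let K : Subgroup G :=
    { carrier := {g | ψ g = 1}
      one_mem' := hψone
      mul_mem' := fun {a b} ha hb => by
        show ψ (a * b) = 1
        rw [hψ_cocycle, ha, hb, map_one, one_mul]
      inv_mem' := fun {a} ha => hψinv a ha }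
  refine ⟨K, ?_, ?_⟩
  · rw [eq_top_iff]
    intro g _
    have hk : (ψ g : G)⁻¹ * g ∈ K := by
      show ψ ((ψ g : G)⁻¹ * g) = 1
      rw [hψ_cocycle]
      have h1 : ψ ((ψ g : G)⁻¹) = (ψ g)⁻¹ := by
        have := hψN (ψ g)⁻¹
        simpa using this
      rw [h1]
      apply Subtype.ext
      show (ψ g : G)⁻¹ * ((ψ g : G)⁻¹ * (ψ g : G) * ((ψ g : G)⁻¹)⁻¹) = 1
      group
    have hgeq : g = (ψ g : G) * ((ψ g : G)⁻¹ * g) := by group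
    rw [hgeq]
    exact Subgroup.mul_mem _ (Subgroup.mem_sup_left (ψ g).2) (Subgroup.mem_sup_right hk)
  · intro n hn hnK
    have h1 : ψ n = 1 := hnK
    have h2 : ψ n = ⟨n, hn⟩ := hψN ⟨n, hn⟩
    have h3 : (⟨n, hn⟩ : ↥N) = 1 := h2.symm.trans h1
    exact Subtype.ext_iff.mp h3



/-- If `G` is a finite group with trivial `p'`-core (every normal subgroup of order coprime
to `p` is trivial) and a Sylow `p`-subgroup `P` of `G` is elementary abelian, then the
Frattini subgroup of `G` is trivial. -/
theorem stmt_6 {G : Type*} [Group G] [Finite G] (p : ℕ) (hp : p.Prime)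
    (hOp' : ∀ N : Subgroup G, N.Normal → ¬ p ∣ Nat.card N → N = ⊥)
    (P : Sylow p G)
    (hab : ∀ x y : G, x ∈ P → y ∈ P → x * y = y * x)
    (hexp : ∀ x ∈ P, x ^ p = 1) :
    frattini G = ⊥ := by
  haveI : Fact p.Prime := ⟨hp⟩
  have hNnormal : (frattini G).Normal := inferInstance
  have hpg : IsPGroup p (frattini G) := aux_pgroup hp (frattini G) frattini_nilpotent hOp'
  have hNP : frattini G ≤ (P : Subgroup G) := aux_le_sylow hNnormal hpg P
  have hm : ¬ p ∣ (P : Subgroup G).index := P.not_dvd_index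
  obtain ⟨K, hsup, htriv⟩ := aux_gaschutz hp (frattini G) (P : Subgroup G) hNP hab hexp hm
  have hKtop : K = ⊤ := frattini_nongenerating (by rwa [sup_comm] at hsup)
  rw [eq_bot_iff]
  intro n hn
  rw [Subgroup.mem_bot]
  exact htriv n hn (hKtop ▸ Subgroup.mem_top n)
end

section
/- Let p be a prime, n a prime distinct from p, and q a prime power with p^d = (q^n - 1)/(q - 1) and d > 1 and p > 2. Then a Sylow p-subgroup of PSL(n,q) is cyclic of order p^d. -/
open Polynomial Matrix

private theorem aux_finrank (F : Type*) [Field F] [Fintype F] {n : ℕ} (hn : n ≠ 0) :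
    Module.finrank F ((X ^ (Fintype.card F ^ n) - X : F[X]).SplittingField) = n := by
  classical
  set q := Fintype.card F with hq
  set gp : F[X] := X ^ q ^ n - X with hgp
  set K := gp.SplittingField with hK
  haveI : Finite K := Module.finite_of_finite F
  haveI : Fintype K := Fintype.ofFinite K
  have hq1 : 1 < q := Fintype.one_lt_card
  have aux : gp ≠ 0 := FiniteField.X_pow_card_pow_sub_X_ne_zero F hn hq1
  obtain ⟨p', hp'⟩ := CharP.exists F
  haveI := hp'
  have hp'p : p'.Prime := CharP.char_is_prime F p'
  obtain ⟨k, -, hqk⟩ := FiniteField.card F p'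
  haveI : CharP K p' := charP_of_injective_algebraMap (algebraMap F K).injective p'
  have hqnp : q ^ n = p' ^ ((k : ℕ) * n) := by rw [hq, hqk, ← pow_mul]
  have hsep : gp.Separable := by
    refine galois_poly_separable p' (q ^ n) ?_
    rw [hqnp]
    exact dvd_pow_self p' (by positivity)
  have key : Fintype.card (gp.rootSet K) = gp.natDegree :=
    card_rootSet_eq_natDegree hsep (SplittingField.splits gp)
  have nd : gp.natDegree = q ^ n := FiniteField.X_pow_card_pow_sub_X_natDegree_eq F hn hq1
  have haev : ∀ x : K, (aeval x) gp = x ^ (q ^ n) - x := by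
    intro x; simp [hgp]
  haveI := Fact.mk hp'p
  suffices huniv : gp.rootSet K = Set.univ by
    rw [nd] at key
    rw [Fintype.card_congr ((Equiv.setCongr huniv).trans (Equiv.Set.univ K))] at key
    rw [Module.card_eq_pow_finrank (K := F) (V := K)] at key
    exact Nat.pow_right_injective hq1 key
  rw [Set.eq_univ_iff_forall]
  suffices h : ∀ x ∈ (⊤ : Subalgebra F K), x ∈ gp.rootSet K by simpa using h
  rw [← SplittingField.adjoin_rootSet]
  simp_rw [Algebra.mem_adjoin_iff]
  intro x hx
  have hqn0 : q ^ n ≠ 0 := by positivity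
  refine Subring.closure_induction ?_ ?_ ?_ ?_ ?_ ?_ hx <;>
    simp_rw [mem_rootSet_of_ne aux, haev, sub_eq_zero]
  · rintro y (⟨r, rfl⟩ | hy)
    · rw [← map_pow, FiniteField.pow_card_pow]
    · rw [mem_rootSet_of_ne aux, haev, sub_eq_zero] at hy
      exact hy
  · exact zero_pow hqn0
  · exact one_pow _
  · intro a b _ _ ha hb
    rw [hqnp] at ha hb ⊢
    rw [add_pow_char_pow, ha, hb]
  · intro a _ ha
    rw [hqnp] at ha ⊢
    rw [neg_pow, ha, neg_one_pow_char_pow]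
    exact neg_one_mul a
  · intro a b _ _ ha hb
    rw [mul_pow, ha, hb]

/-- Let `p` be a prime, `n` a prime distinct from `p`, and `q` a prime power (the
cardinality of a finite field `F`) with `p^d = (q^n - 1)/(q - 1)`, `d > 1` and `p > 2`.
Then a Sylow `p`-subgroup of `PSL(n,q)` is cyclic of order `p^d`. -/
theorem stmt_10 (p n d : ℕ) (hp : p.Prime) (hn : n.Prime) (hne : n ≠ p)
    (hd : 1 < d) (hp2 : 2 < p)
    (F : Type*) [Field F] [Fintype F] (q : ℕ) (hq : q = Fintype.card F)
    (hpd : p ^ d = (q ^ n - 1) / (q - 1))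
    (P : Sylow p (Matrix.SpecialLinearGroup (Fin n) F ⧸
      Subgroup.center (Matrix.SpecialLinearGroup (Fin n) F))) :
    IsCyclic P ∧ Nat.card P = p ^ d := by
  classical
  haveI : Fact p.Prime := ⟨hp⟩
  have hn0 : n ≠ 0 := hn.ne_zero
  have hq1 : 1 < q := hq ▸ Fintype.one_lt_card
  have hq0 : 0 < q := by omega
  have hdvd : (q - 1) ∣ (q ^ n - 1) := by simpa using Nat.sub_dvd_pow_sub_pow q 1 n
  have hmul : p ^ d * (q - 1) = q ^ n - 1 := by rw [hpd, Nat.div_mul_cancel hdvd]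
  have hqn1 : 1 < q ^ n := Nat.one_lt_pow hn0 hq1
  have hpdvd : p ^ d ∣ q ^ n - 1 := ⟨q - 1, hmul.symm⟩
  have hp1dvd : p ∣ q ^ n - 1 :=
    dvd_trans (dvd_pow_self p (by omega : d ≠ 0)) hpdvd
  -- p does not divide q
  have hpq : ¬ p ∣ q := by
    intro h
    have h2 : p ∣ q ^ n := dvd_pow h hn0
    have h3 : p ∣ 1 := by
      have := Nat.dvd_sub h2 hp1dvd
      rwa [(by omega : q ^ n - (q ^ n - 1) = 1)] at this
    have h4 := Nat.dvd_one.mp h3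
    omega
  -- p does not divide q - 1
  have hpq1 : ¬ p ∣ (q - 1) := by
    intro h
    have hq_mod : (q : ZMod p) = 1 := by
      have h0 : ((q - 1 : ℕ) : ZMod p) = 0 := (ZMod.natCast_eq_zero_iff _ _).mpr h
      rw [Nat.cast_sub (by omega : 1 ≤ q)] at h0
      push_cast at h0
      rwa [sub_eq_zero] at h0
    have hZ : ((p : ℤ)) ^ d = ∑ i ∈ Finset.range n, (q : ℤ) ^ i := by
      have h1 : (∑ i ∈ Finset.range n, (q : ℤ) ^ i) * ((q : ℤ) - 1) = (q : ℤ) ^ n - 1 :=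
        geom_sum_mul (q : ℤ) n
      have h2 : (p : ℤ) ^ d * ((q : ℤ) - 1) = (q : ℤ) ^ n - 1 := by
        have h3 := congrArg (fun t : ℕ => (t : ℤ)) hmul
        simp only [Nat.cast_mul, Nat.cast_pow, Nat.cast_sub (by omega : 1 ≤ q),
          Nat.cast_sub hqn1.le, Nat.cast_one] at h3
        exact_mod_cast h3
      have hq1' : (q : ℤ) - 1 ≠ 0 := by
        have : (1 : ℤ) < q := by exact_mod_cast hq1
        omega
      exact mul_right_cancel₀ hq1' (h2.trans h1.symm)
    have hn_mod : ((n : ℕ) : ZMod p) = 0 := by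
      have h3 := congrArg (fun t : ℤ => (t : ZMod p)) hZ
      push_cast at h3
      rw [hq_mod] at h3
      simp only [ZMod.natCast_self, zero_pow (by omega : d ≠ 0), one_pow] at h3
      simpa using h3.symm
    have : p ∣ n := (ZMod.natCast_eq_zero_iff n p).mp hn_mod
    exact hne ((Nat.prime_dvd_prime_iff_eq hp hn).mp this).symm
  -- coprimality
  have hcop : Nat.Coprime (p ^ d) (q - 1) :=
    Nat.Coprime.pow_left _ ((hp.coprime_iff_not_dvd).mpr hpq1)
  -- the order of q mod p is n
  have horder : ∀ m : ℕ, 0 < m → m < n → ¬ p ∣ q ^ m - 1 := by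
    intro m hm0 hmn hdvdm
    have hpow : ∀ j : ℕ, p ∣ q ^ j - 1 → (q : ZMod p) ^ j = 1 := by
      intro j hj
      have h0 : ((q ^ j - 1 : ℕ) : ZMod p) = 0 := (ZMod.natCast_eq_zero_iff _ _).mpr hj
      rw [Nat.cast_sub (Nat.one_le_pow _ _ hq0)] at h0
      push_cast at h0
      rw [sub_eq_zero] at h0
      exact h0
    have he_m : orderOf (q : ZMod p) ∣ m := orderOf_dvd_of_pow_eq_one (hpow m hdvdm)
    have he_n : orderOf (q : ZMod p) ∣ n := orderOf_dvd_of_pow_eq_one (hpow n hp1dvd)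
    rcases (hn.eq_one_or_self_of_dvd _ he_n) with he1 | hen
    · have : (q : ZMod p) = 1 := orderOf_eq_one_iff.mp he1
      apply hpq1
      have : ((q - 1 : ℕ) : ZMod p) = 0 := by
        rw [Nat.cast_sub (by omega : 1 ≤ q)]
        push_cast
        rw [this, sub_self]
      exact (ZMod.natCast_eq_zero_iff _ _).mp this
    · have := Nat.le_of_dvd hm0 he_m
      omega
  -- the splitting field of X^(q^n) - X
  set KP : F[X] := X ^ (Fintype.card F ^ n) - X with hKP
  set K := KP.SplittingField with hKdef
  haveI : Finite K := Module.finite_of_finite F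
  haveI : Fintype K := Fintype.ofFinite K
  have hrank : Module.finrank F K = n := aux_finrank F hn0
  have hcardK : Fintype.card K = q ^ n := by
    rw [Module.card_eq_pow_finrank (K := F) (V := K), hrank, ← hq]
  let b : Module.Basis (Fin n) F K := Module.finBasisOfFinrankEq F K hrank
  -- a cyclic subgroup of norm-one units of order p^d
  obtain ⟨g, hg⟩ := IsCyclic.exists_generator (α := Kˣ)
  have hgord : orderOf g = q ^ n - 1 := by
    rw [orderOf_eq_card_of_forall_mem_zpowers hg, Nat.card_units, Nat.card_eq_fintype_card, hcardK]
  set x := g ^ ((q ^ n - 1) / p ^ d) with hxdef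
  have hxord : orderOf x = p ^ d := by
    rw [hxdef, orderOf_pow, hgord]
    have h1 : (q ^ n - 1) / p ^ d ∣ q ^ n - 1 := Nat.div_dvd_of_dvd hpdvd
    rw [Nat.gcd_eq_right h1]
    exact Nat.div_div_self hpdvd (by omega)
  set ν : Kˣ →* Fˣ := Units.map (Algebra.norm F : K →* F) with hν
  have hxnorm : ν x = 1 := by
    have h1 : orderOf (ν x) ∣ p ^ d := hxord ▸ orderOf_map_dvd ν x
    have h2 : orderOf (ν x) ∣ q - 1 := by
      have h3 := orderOf_dvd_natCard (ν x)
      rwa [Nat.card_units, Nat.card_eq_fintype_card, ← hq] at h3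
    exact orderOf_eq_one_iff.mp (Nat.dvd_one.mp (hcop ▸ Nat.dvd_gcd h1 h2))
  set N := ν.ker with hN
  have hxN : x ∈ N := MonoidHom.mem_ker.mpr hxnorm
  set x' : N := ⟨x, hxN⟩ with hx'
  have hx'ord : orderOf x' = p ^ d := by
    rw [← hxord]
    exact (orderOf_injective N.subtype N.subtype_injective x').symm
  -- the map into SL_n(F)
  have hdet : ∀ y : N, ((Algebra.leftMulMatrix b) (((y : Kˣ) : K))).det = 1 := by
    intro y
    rw [← Algebra.norm_eq_matrix_det b]
    have hy : ν (y : Kˣ) = 1 := MonoidHom.mem_ker.mp y.2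
    have := congrArg (Units.val) hy
    simpa [hν] using this
  set Φ : N →* Matrix.SpecialLinearGroup (Fin n) F :=
    { toFun := fun y => ⟨Algebra.leftMulMatrix b ((y : Kˣ) : K), hdet y⟩
      map_one' := by
        apply Subtype.ext
        simp
      map_mul' := fun y z => by
        apply Subtype.ext
        simp [Matrix.SpecialLinearGroup.coe_mul]
        rfl } with hΦ
  have hΦinj : Function.Injective Φ := by
    intro y z h
    have h1 : (Algebra.leftMulMatrix b) ((y : Kˣ) : K)
        = (Algebra.leftMulMatrix b) ((z : Kˣ) : K) := congrArg Subtype.val h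
    exact Subtype.ext (Units.ext (Algebra.leftMulMatrix_injective b h1))
  set z := Φ x' with hz
  have hzord : orderOf z = p ^ d := by rw [hz, orderOf_injective Φ hΦinj x', hx'ord]
  -- pushing down to PSL
  set π := QuotientGroup.mk' (Subgroup.center (Matrix.SpecialLinearGroup (Fin n) F)) with hπ
  set w := π z with hw
  have hword : orderOf w = p ^ d := by
    have hdvd_w : orderOf w ∣ p ^ d := hzord ▸ orderOf_map_dvd π z
    have hker : z ^ orderOf w ∈ Subgroup.center (Matrix.SpecialLinearGroup (Fin n) F) := by
      have h1 : π (z ^ orderOf w) = 1 := by rw [map_pow, ← hw, pow_orderOf_eq_one]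
      have h2 := MonoidHom.mem_ker.mpr h1
      rwa [hπ, QuotientGroup.ker_mk'] at h2
    obtain ⟨r, hrn, hrz⟩ := Matrix.SpecialLinearGroup.mem_center_iff.mp hker
    rw [Fintype.card_fin] at hrn
    have hr0 : r ≠ 0 := by
      intro h0
      rw [h0, zero_pow hn0] at hrn
      exact zero_ne_one hrn
    have hzm1 : z ^ orderOf w = 1 := by
      have ho1 : (z ^ orderOf w) ^ (p ^ d) = 1 := by
        rw [← pow_mul, mul_comm, pow_mul, ← hzord, pow_orderOf_eq_one, one_pow]
      have ho2 : (z ^ orderOf w) ^ (q - 1) = 1 := by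
        apply Subtype.ext
        rw [Matrix.SpecialLinearGroup.coe_pow, ← hrz, ← map_pow, hq,
          FiniteField.pow_card_sub_one_eq_one r hr0]
        simp
      have h3 := Nat.dvd_gcd (orderOf_dvd_of_pow_eq_one ho1) (orderOf_dvd_of_pow_eq_one ho2)
      rw [hcop] at h3
      exact orderOf_eq_one_iff.mp (Nat.dvd_one.mp h3)
    have h4 : p ^ d ∣ orderOf w := hzord ▸ orderOf_dvd_of_pow_eq_one hzm1
    exact Nat.dvd_antisymm hdvd_w h4
  -- cardinality of PSL via GL
  have hGL0 : Nat.card (GL (Fin n) F) ≠ 0 := Nat.card_pos.ne'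
  have hfactGL : (Nat.card (GL (Fin n) F)).factorization p = d := by
    rw [Matrix.card_GL_field]
    have hne : ∀ i : Fin n, Fintype.card F ^ n - Fintype.card F ^ (i : ℕ) ≠ 0 := by
      intro i
      have h5 : Fintype.card F ^ (i : ℕ) < Fintype.card F ^ n :=
        Nat.pow_lt_pow_right (hq ▸ hq1) i.2
      omega
    rw [Nat.factorization_prod (fun i _ => hne i), Finset.sum_apply']
    rw [Finset.sum_eq_single (⟨0, hn.pos⟩ : Fin n)]
    · have h6 : Fintype.card F ^ n - Fintype.card F ^ ((⟨0, hn.pos⟩ : Fin n) : ℕ)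
          = p ^ d * (q - 1) := by
        simp only [pow_zero]
        rw [← hq, hmul]
      rw [h6, Nat.factorization_mul (pow_ne_zero d hp.pos.ne') (by omega : q - 1 ≠ 0)]
      rw [Finsupp.add_apply, hp.factorization_pow, Finsupp.single_eq_same,
        Nat.factorization_eq_zero_of_not_dvd hpq1]
      omega
    · intro i _ hi
      have hipos : 0 < (i : ℕ) := by
        rcases Nat.eq_zero_or_pos (i : ℕ) with h | h
        · exact absurd (Fin.ext h) hi
        · exact h
      have hfac : Fintype.card F ^ n - Fintype.card F ^ (i : ℕ)
          = q ^ (i : ℕ) * (q ^ (n - (i : ℕ)) - 1) := by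
        rw [← hq, Nat.mul_sub, mul_one, ← pow_add, Nat.add_sub_cancel' i.2.le]
      rw [hfac]
      apply Nat.factorization_eq_zero_of_not_dvd
      intro hdd
      rcases (Nat.Prime.dvd_mul hp).mp hdd with h | h
      · exact hpq (hp.dvd_of_dvd_pow h)
      · have h7 := i.2
        exact horder _ (by omega) (by omega) h
    · intro h
      exact absurd (Finset.mem_univ _) h
  have hdvd_SL_GL : Nat.card (Matrix.SpecialLinearGroup (Fin n) F) ∣ Nat.card (GL (Fin n) F) := by
    apply Subgroup.card_dvd_of_injective (Matrix.SpecialLinearGroup.toGL)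
    intro a c h
    exact Subtype.ext (congrArg Units.val h)
  have hdvd_PSL : Nat.card (Matrix.SpecialLinearGroup (Fin n) F ⧸
      Subgroup.center (Matrix.SpecialLinearGroup (Fin n) F)) ∣ Nat.card (GL (Fin n) F) :=
    (Subgroup.card_quotient_dvd_card _).trans hdvd_SL_GL
  have hPSL0 : Nat.card (Matrix.SpecialLinearGroup (Fin n) F ⧸
      Subgroup.center (Matrix.SpecialLinearGroup (Fin n) F)) ≠ 0 := Nat.card_pos.ne'
  have hfactPSL : (Nat.card (Matrix.SpecialLinearGroup (Fin n) F ⧸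
      Subgroup.center (Matrix.SpecialLinearGroup (Fin n) F))).factorization p = d := by
    apply le_antisymm
    · have h8 := (Nat.factorization_le_iff_dvd hPSL0 hGL0).mpr hdvd_PSL
      have h9 := h8 p
      rwa [hfactGL] at h9
    · rw [← (hp.pow_dvd_iff_le_factorization hPSL0)]
      exact hword ▸ orderOf_dvd_natCard w
  have hcardP : Nat.card P = p ^ d := by
    rw [Sylow.card_eq_multiplicity, hfactPSL]
  -- cyclicity
  have hZw : Nat.card (Subgroup.zpowers w) = p ^ d := by rw [Nat.card_zpowers, hword]
  have hpgrp : IsPGroup p (Subgroup.zpowers w) := IsPGroup.of_card hZw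
  obtain ⟨Q, hQ⟩ := hpgrp.exists_le_sylow
  have hQcard : Nat.card Q = p ^ d := by rw [Sylow.card_eq_multiplicity, hfactPSL]
  have heq : Subgroup.zpowers w = Q.toSubgroup :=
    Subgroup.eq_of_le_of_card_ge hQ (by rw [hQcard, hZw])
  have hZcyc : IsCyclic (Subgroup.zpowers w) := by
    refine ⟨⟨⟨w, Subgroup.mem_zpowers w⟩, ?_⟩⟩
    rintro ⟨y, hy⟩
    obtain ⟨k, hk⟩ := Subgroup.mem_zpowers_iff.mp hy
    refine Subgroup.mem_zpowers_iff.mpr ⟨k, ?_⟩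
    apply Subtype.ext
    rw [Subgroup.coe_zpow]
    exact hk
  have hQcyc : IsCyclic Q := heq ▸ hZcyc
  have e := Sylow.equiv Q P
  exact ⟨isCyclic_of_surjective e e.surjective, hcardP⟩
end

section
/- The direct product of two finite groups, each of which is a nontrivial C(p)-group (every subgroup of order p is complemented and p divides the group order), is again a nontrivial C(p)-group. -/
open Pointwise

/-- A finite group is a nontrivial `C(p)`-group if `p` divides its order and every
subgroup of order `p` has a complement. -/
def NontrivialCp (p : ℕ) (G : Type*) [Group G] : Prop :=
  p ∣ Nat.card G ∧ ∀ A : Subgroup G, Nat.card A = p → Complemented A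

lemma aux_right {G₁ G₂ : Type*} [Group G₁] [Group G₂] {p : ℕ} (hp : p.Prime)
    (a : G₁) (b : G₂) (hord : orderOf ((a, b) : G₁ × G₂) = p) (hb : b ≠ 1)
    (h₂ : ∀ A : Subgroup G₂, Nat.card A = p → Complemented A) :
    Complemented (Subgroup.zpowers ((a, b) : G₁ × G₂)) := by
  have hpow : ((a, b) : G₁ × G₂) ^ p = 1 := by rw [← hord]; exact pow_orderOf_eq_one _
  have hbp : b ^ p = 1 := congrArg Prod.snd hpow
  have hob : orderOf b = p := by
    rcases hp.eq_one_or_self_of_dvd _ (orderOf_dvd_of_pow_eq_one hbp) with h | h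
    · exact absurd (orderOf_eq_one_iff.mp h) hb
    · exact h
  obtain ⟨K₂, hKmul, hKinf⟩ := h₂ (Subgroup.zpowers b) (by rw [Nat.card_zpowers, hob])
  refine ⟨(⊤ : Subgroup G₁).prod K₂, ?_, ?_⟩
  · ext ⟨x, y⟩
    simp only [Set.mem_univ, iff_true]
    have hy : y ∈ (Subgroup.zpowers b : Set G₂) * (K₂ : Set G₂) := by
      rw [hKmul]; trivial
    obtain ⟨u, hu, k, hk, huk⟩ := hy
    obtain ⟨i, hi⟩ := hu
    refine ⟨(a, b) ^ i, Subgroup.zpow_mem _ (Subgroup.mem_zpowers _) i,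
      (a ^ (-i) * x, k), ⟨trivial, hk⟩, ?_⟩
    have : ((a, b) : G₁ × G₂) ^ i = (a ^ i, b ^ i) := rfl
    rw [this]
    refine Prod.ext ?_ ?_
    · simp [mul_assoc, ← zpow_add]
    · simpa [hi] using huk
  · rw [eq_bot_iff]
    rintro z ⟨hz1, hz2⟩
    obtain ⟨i, hi⟩ := hz1
    have hzi : z = (a ^ i, b ^ i) := hi.symm
    have hbK : b ^ i ∈ Subgroup.zpowers b ⊓ K₂ := by
      refine ⟨Subgroup.zpow_mem _ (Subgroup.mem_zpowers _) i, ?_⟩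
      have := hz2.2
      rwa [hzi] at this
    rw [hKinf, Subgroup.mem_bot] at hbK
    have hdvd : (p : ℤ) ∣ i := by
      rw [← hob]
      exact orderOf_dvd_iff_zpow_eq_one.mpr hbK
    have : ((a, b) : G₁ × G₂) ^ i = 1 := by
      rw [orderOf_dvd_iff_zpow_eq_one.mp (hord ▸ hdvd)]
    rw [Subgroup.mem_bot, hzi, ← this]
    rfl

lemma aux_left {G₁ G₂ : Type*} [Group G₁] [Group G₂] {p : ℕ} (hp : p.Prime)
    (a : G₁) (b : G₂) (hord : orderOf ((a, b) : G₁ × G₂) = p) (ha : a ≠ 1)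
    (h₁ : ∀ A : Subgroup G₁, Nat.card A = p → Complemented A) :
    Complemented (Subgroup.zpowers ((a, b) : G₁ × G₂)) := by
  have hpow : ((a, b) : G₁ × G₂) ^ p = 1 := by rw [← hord]; exact pow_orderOf_eq_one _
  have hap : a ^ p = 1 := congrArg Prod.fst hpow
  have hoa : orderOf a = p := by
    rcases hp.eq_one_or_self_of_dvd _ (orderOf_dvd_of_pow_eq_one hap) with h | h
    · exact absurd (orderOf_eq_one_iff.mp h) ha
    · exact h
  obtain ⟨K₁, hKmul, hKinf⟩ := h₁ (Subgroup.zpowers a) (by rw [Nat.card_zpowers, hoa])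
  refine ⟨K₁.prod ⊤, ?_, ?_⟩
  · ext ⟨x, y⟩
    simp only [Set.mem_univ, iff_true]
    have hx : x ∈ (Subgroup.zpowers a : Set G₁) * (K₁ : Set G₁) := by
      rw [hKmul]; trivial
    obtain ⟨u, hu, k, hk, huk⟩ := hx
    obtain ⟨i, hi⟩ := hu
    refine ⟨(a, b) ^ i, Subgroup.zpow_mem _ (Subgroup.mem_zpowers _) i,
      (k, b ^ (-i) * y), ⟨hk, trivial⟩, ?_⟩
    have : ((a, b) : G₁ × G₂) ^ i = (a ^ i, b ^ i) := rfl
    rw [this]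
    refine Prod.ext ?_ ?_
    · simpa [hi] using huk
    · simp [mul_assoc, ← zpow_add]
  · rw [eq_bot_iff]
    rintro z ⟨hz1, hz2⟩
    obtain ⟨i, hi⟩ := hz1
    have hzi : z = (a ^ i, b ^ i) := hi.symm
    have haK : a ^ i ∈ Subgroup.zpowers a ⊓ K₁ := by
      refine ⟨Subgroup.zpow_mem _ (Subgroup.mem_zpowers _) i, ?_⟩
      have := hz2.1
      rwa [hzi] at this
    rw [hKinf, Subgroup.mem_bot] at haK
    have hdvd : (p : ℤ) ∣ i := by
      rw [← hoa]
      exact orderOf_dvd_iff_zpow_eq_one.mpr haK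
    have : ((a, b) : G₁ × G₂) ^ i = 1 := by
      rw [orderOf_dvd_iff_zpow_eq_one.mp (hord ▸ hdvd)]
    rw [Subgroup.mem_bot, hzi, ← this]
    rfl

/-- The direct product of two nontrivial `C(p)`-groups is a nontrivial `C(p)`-group. -/
theorem stmt_18 (p : ℕ) (hp : p.Prime) (G₁ G₂ : Type*) [Group G₁] [Group G₂]
    [Finite G₁] [Finite G₂] (h₁ : NontrivialCp p G₁) (h₂ : NontrivialCp p G₂) :
    NontrivialCp p (G₁ × G₂) := by
  obtain ⟨hd₁, hc₁⟩ := h₁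
  obtain ⟨hd₂, hc₂⟩ := h₂
  constructor
  · rw [Nat.card_prod]
    exact hd₁.mul_right _
  · intro A hA
    -- A contains a nontrivial element
    have hnt : ∃ g ∈ A, g ≠ 1 := by
      by_contra h
      push_neg at h
      have : A = ⊥ := by
        rw [eq_bot_iff]
        intro g hg
        rw [Subgroup.mem_bot]
        exact h g hg
      rw [this, Subgroup.card_bot] at hA
      exact hp.one_lt.ne' hA.symm
    obtain ⟨g, hg, hg1⟩ := hnt
    have hordg : orderOf g = p := by
      have hdvd : orderOf g ∣ p := hA ▸ Subgroup.orderOf_dvd_natCard A hg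
      rcases hp.eq_one_or_self_of_dvd _ hdvd with h | h
      · exact absurd (orderOf_eq_one_iff.mp h) hg1
      · exact h
    have hAeq : A = Subgroup.zpowers g := by
      refine (Subgroup.eq_of_le_of_card_ge (Subgroup.zpowers_le.mpr hg) ?_).symm
      rw [Nat.card_zpowers, hordg, hA]
    obtain ⟨a, b⟩ := g
    rw [hAeq]
    by_cases hb : b = 1
    · have ha : a ≠ 1 := by
        intro ha
        exact hg1 (Prod.ext ha hb)
      exact aux_left hp a b hordg ha hc₁
    · exact aux_right hp a b hordg hb hc₂
end
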